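/- Sobolev norm interpolation for perturbed Dirac operators: let D₀ and D₁ = D₀ + rB be first-order operators where B is a bounded (order-zero) operator, r ≥ 1, and suppose the Sobolev norms satisfy ‖σ‖_{H^1} ≤ C₁(‖D₁σ‖_{L²} + r‖σ‖_{L²}) for all σ, and that [B, D₀^m] is a differential operator of order ≤ m with ‖[B, D₀^m]σ‖_{L²} ≤ C‖σ‖_{H^m}. Then for every m there exists C_m such that ‖σ‖_{H^m} ≤ C_m Σ_{j=0}^m r^{m-j} ‖D₁^j σ‖_{L²}. -/

import Mathlib

open Finset

/-- The `m`-th Sobolev norm of the scale defined by powers of `D₀`: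
`‖σ‖_m = Σ_{i=0}^m ‖D₀^i σ‖`. -/
noncomputable def sobNorm {X : Type*} [NormedAddCommGroup X] [NormedSpace ℝ X]
    (D₀ : X →ₗ[ℝ] X) (m : ℕ) (σ : X) : ℝ :=
  ∑ i ∈ Finset.range (m + 1), ‖(D₀ ^ i) σ‖

lemma sobNorm_nonneg {X : Type*} [NormedAddCommGroup X] [NormedSpace ℝ X]
    (D₀ : X →ₗ[ℝ] X) (m : ℕ) (σ : X) : 0 ≤ sobNorm D₀ m σ :=
  Finset.sum_nonneg fun _ _ => norm_nonneg _

lemma sobNorm_mono {X : Type*} [NormedAddCommGroup X] [NormedSpace ℝ X]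
    (D₀ : X →ₗ[ℝ] X) {m n : ℕ} (h : m ≤ n) (σ : X) :
    sobNorm D₀ m σ ≤ sobNorm D₀ n σ :=
  Finset.sum_le_sum_of_subset_of_nonneg (Finset.range_subset_range.2 (by omega))
    (fun _ _ _ => norm_nonneg _)

lemma norm_le_sobNorm {X : Type*} [NormedAddCommGroup X] [NormedSpace ℝ X]
    (D₀ : X →ₗ[ℝ] X) (m : ℕ) (σ : X) : ‖σ‖ ≤ sobNorm D₀ m σ := by
  have := Finset.single_le_sum (f := fun i => ‖(D₀ ^ i) σ‖)
    (fun _ _ => norm_nonneg _) (Finset.mem_range.2 (Nat.succ_pos m))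
  simpa [sobNorm] using this

/-- Sobolev norm interpolation for the perturbed Dirac operator `D₁ = D₀ + r B`:
if `‖σ‖₁ ≤ C₁(‖D₁σ‖ + r‖σ‖)`, `B` is bounded, and each commutator `[B, D₀^m]` is of
order `≤ m`, then for every `m` there is `C_m` with
`‖σ‖_m ≤ C_m Σ_{j=0}^m r^{m-j} ‖D₁^j σ‖`. -/
theorem stmt15 {X : Type*} [NormedAddCommGroup X] [NormedSpace ℝ X]
    (D₀ B : X →ₗ[ℝ] X) (r : ℝ) (hr : 1 ≤ r)
    (C₁ C : ℝ) (hC₁ : 0 < C₁) (hC : 0 < C)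
    (hB : ∀ σ, ‖B σ‖ ≤ C * ‖σ‖)
    (h1 : ∀ σ, sobNorm D₀ 1 σ ≤ C₁ * (‖(D₀ + r • B) σ‖ + r * ‖σ‖))
    (hcomm : ∀ (m : ℕ) (σ : X), ‖(B * D₀ ^ m - D₀ ^ m * B) σ‖ ≤ C * sobNorm D₀ m σ) :
    ∀ m : ℕ, ∃ Cm : ℝ, 0 < Cm ∧ ∀ σ : X,
      sobNorm D₀ m σ ≤
        Cm * ∑ j ∈ Finset.range (m + 1), r ^ (m - j) * ‖((D₀ + r • B) ^ j) σ‖ := by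
  have hr0 : (0:ℝ) < r := lt_of_lt_of_le one_pos hr
  intro m
  induction m with
  | zero =>
    exact ⟨1, one_pos, fun σ => by simp [sobNorm]⟩
  | succ m ih =>
    obtain ⟨Cm, hCm, hIH⟩ := ih
    refine ⟨C₁ * Cm * ((m + 1 : ℝ) * C + 2), by positivity, fun σ => ?_⟩
    set D₁ : X →ₗ[ℝ] X := D₀ + r • B with hD₁
    set T : ℝ := ∑ j ∈ Finset.range (m + 2), r ^ (m + 1 - j) * ‖(D₁ ^ j) σ‖ with hT
    have hTnn : 0 ≤ T := Finset.sum_nonneg fun j _ => by positivity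
    set S : ℝ := sobNorm D₀ m σ with hS
    set SD : ℝ := sobNorm D₀ m (D₁ σ) with hSD
    -- pointwise key inequality
    have key : ∀ i ∈ Finset.range (m + 1),
        ‖(D₀ ^ i) σ‖ + ‖(D₀ ^ (i + 1)) σ‖ ≤
          C₁ * (‖(D₀ ^ i) (D₁ σ)‖ + (r * (C * S) + r * ‖(D₀ ^ i) σ‖)) := by
      intro i hi
      have hi' : i ≤ m := by simpa using Nat.lt_succ_iff.mp (Finset.mem_range.mp hi)
      have hpowcomm : D₀ ((D₀ ^ i) σ) = (D₀ ^ i) (D₀ σ) := by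
        rw [← Module.End.mul_apply, ← Module.End.mul_apply, ← pow_succ, ← pow_succ']
      have hid : D₁ ((D₀ ^ i) σ) = (D₀ ^ i) (D₁ σ) + r • ((B * D₀ ^ i - D₀ ^ i * B) σ) := by
        simp only [hD₁, LinearMap.add_apply, LinearMap.smul_apply, LinearMap.sub_apply,
          Module.End.mul_apply, map_add, map_smul, hpowcomm]
        module
      have h2 : ‖(B * D₀ ^ i - D₀ ^ i * B) σ‖ ≤ C * S := by
        refine (hcomm i σ).trans ?_
        have := sobNorm_mono D₀ hi' σ
        nlinarith
      have hnorm : ‖D₁ ((D₀ ^ i) σ)‖ ≤ ‖(D₀ ^ i) (D₁ σ)‖ + r * (C * S) := by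
        rw [hid]
        refine (norm_add_le _ _).trans ?_
        rw [norm_smul, Real.norm_of_nonneg hr0.le]
        gcongr
      have h1' := h1 ((D₀ ^ i) σ)
      have hsob1 : sobNorm D₀ 1 ((D₀ ^ i) σ) = ‖(D₀ ^ i) σ‖ + ‖(D₀ ^ (i + 1)) σ‖ := by
        simp [sobNorm, Finset.sum_range_succ, pow_succ, Module.End.mul_apply, hpowcomm]
      rw [hsob1] at h1'
      refine h1'.trans ?_
      have : ‖D₁ ((D₀ ^ i) σ)‖ + r * ‖(D₀ ^ i) σ‖ ≤
          ‖(D₀ ^ i) (D₁ σ)‖ + (r * (C * S) + r * ‖(D₀ ^ i) σ‖) := by linarith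
      nlinarith [hC₁.le]
    -- summing up
    have sum1 : sobNorm D₀ (m + 1) σ ≤
        ∑ i ∈ Finset.range (m + 1), (‖(D₀ ^ i) σ‖ + ‖(D₀ ^ (i + 1)) σ‖) := by
      rw [Finset.sum_add_distrib]
      have e1 : sobNorm D₀ (m + 1) σ
          = (∑ i ∈ Finset.range (m + 1), ‖(D₀ ^ (i + 1)) σ‖) + ‖σ‖ := by
        rw [sobNorm, Finset.sum_range_succ']
        simp
      rw [e1]
      have h2 : ‖σ‖ ≤ S := norm_le_sobNorm D₀ m σ
      rw [hS, sobNorm] at h2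
      linarith
    have sum2 : ∑ i ∈ Finset.range (m + 1), (‖(D₀ ^ i) σ‖ + ‖(D₀ ^ (i + 1)) σ‖) ≤
        ∑ i ∈ Finset.range (m + 1),
          C₁ * (‖(D₀ ^ i) (D₁ σ)‖ + (r * (C * S) + r * ‖(D₀ ^ i) σ‖)) :=
      Finset.sum_le_sum key
    have sum3 : ∑ i ∈ Finset.range (m + 1),
          C₁ * (‖(D₀ ^ i) (D₁ σ)‖ + (r * (C * S) + r * ‖(D₀ ^ i) σ‖))
        = C₁ * (SD + ((m + 1 : ℝ) * (r * (C * S)) + r * S)) := by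
      rw [← Finset.mul_sum]
      congr 1
      rw [Finset.sum_add_distrib, Finset.sum_add_distrib, Finset.sum_const,
        Finset.card_range, ← Finset.mul_sum, nsmul_eq_mul, hSD, hS]
      simp only [sobNorm]
      push_cast
      ring
    -- bounding SD and r*S by Cm * T
    have hA : SD ≤ Cm * T := by
      refine (hIH (D₁ σ)).trans ?_
      have e : ∀ j, (D₁ ^ j) (D₁ σ) = (D₁ ^ (j + 1)) σ := fun j => by
        rw [pow_succ, Module.End.mul_apply]
      have e2 : ∑ j ∈ Finset.range (m + 1), r ^ (m - j) * ‖(D₁ ^ j) (D₁ σ)‖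
          = ∑ j ∈ Finset.range (m + 1), r ^ (m + 1 - (j + 1)) * ‖(D₁ ^ (j + 1)) σ‖ := by
        refine Finset.sum_congr rfl fun j _ => ?_
        rw [e j]
        congr 2
        omega
      rw [e2]
      have : T = (∑ j ∈ Finset.range (m + 1), r ^ (m + 1 - (j + 1)) * ‖(D₁ ^ (j + 1)) σ‖)
          + r ^ (m + 1) * ‖(D₁ ^ 0) σ‖ := by
        rw [hT, Finset.sum_range_succ']
        norm_num
      have hpos : 0 ≤ r ^ (m + 1) * ‖(D₁ ^ 0) σ‖ := by positivity
      nlinarith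
    have hBnd : r * S ≤ Cm * T := by
      have h2 := hIH σ
      have e3 : r * ∑ j ∈ Finset.range (m + 1), r ^ (m - j) * ‖(D₁ ^ j) σ‖
          = ∑ j ∈ Finset.range (m + 1), r ^ (m + 1 - j) * ‖(D₁ ^ j) σ‖ := by
        rw [Finset.mul_sum]
        refine Finset.sum_congr rfl fun j hj => ?_
        have hj' : j ≤ m := Nat.lt_succ_iff.mp (Finset.mem_range.mp hj)
        rw [← mul_assoc, ← pow_succ']
        congr 2
        omega
      have e4 : T = (∑ j ∈ Finset.range (m + 1), r ^ (m + 1 - j) * ‖(D₁ ^ j) σ‖)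
          + r ^ (m + 1 - (m + 1)) * ‖(D₁ ^ (m + 1)) σ‖ := by
        rw [hT, Finset.sum_range_succ]
      have hpos : 0 ≤ r ^ (m + 1 - (m + 1)) * ‖(D₁ ^ (m + 1)) σ‖ := by positivity
      nlinarith
    -- put it all together
    calc sobNorm D₀ (m + 1) σ
        ≤ C₁ * (SD + ((m + 1 : ℝ) * (r * (C * S)) + r * S)) := by
          rw [← sum3]; exact sum1.trans sum2
      _ ≤ C₁ * (Cm * T + ((m + 1 : ℝ) * (C * (Cm * T)) + Cm * T)) := by
          have hmc : (m + 1 : ℝ) * (r * (C * S)) ≤ (m + 1 : ℝ) * (C * (Cm * T)) := by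
            have : r * (C * S) = C * (r * S) := by ring
            rw [this]
            have : C * (r * S) ≤ C * (Cm * T) := by nlinarith
            nlinarith [this, Nat.cast_nonneg (α := ℝ) m]
          nlinarith [hC₁.le]
      _ = C₁ * Cm * ((m + 1 : ℝ) * C + 2) * T := by ring
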